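/- arXiv:1608.07735 — 4 statements merged into one kernel-verified Lean document; each statement's English description precedes it below -/
import Mathlib

section
/- Let $\lambda^-, \lambda^+ : \mathbb{N} \to \mathbb{R}$ and let $\mathbf{1}_{\mathbb{P}}$ denote the indicator function of the primes. Suppose that for all $m$ in a set $\mathcal{I}$ one has $\lambda^-(m) \le \mathbf{1}_{\mathbb{P}}(m) \le \lambda^+(m)$. Then for all $m_1, \dots, m_5 \in \mathcal{I}$, $\mathbf{1}_{\mathbb{P}}(m_1)\cdots\mathbf{1}_{\mathbb{P}}(m_5) \ge \sum_{i=1}^{5} \lambda^-(m_i) \prod_{j \ne i} \lambda^+(m_j) - 4\,\lambda^+(m_1)\cdots\lambda^+(m_5)$. -/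
open Finset

lemma chain5 (b1 b2 b3 b4 b5 : ℝ)
    (d1 : (1:ℝ) ≤ b1) (d2 : (1:ℝ) ≤ b2) (d3 : (1:ℝ) ≤ b3)
    (d4 : (1:ℝ) ≤ b4) (d5 : (1:ℝ) ≤ b5) :
    b2*b3*b4*b5 + b1*b3*b4*b5 + b1*b2*b4*b5 + b1*b2*b3*b5 + b1*b2*b3*b4 ≤
      4*(b1*b2*b3*b4*b5) + 1 := by
  have c3 : (0:ℝ) ≤ b3 := by linarith
  have c4 : (0:ℝ) ≤ b4 := by linarith
  have c5 : (0:ℝ) ≤ b5 := by linarith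
  have P2 : (1:ℝ) ≤ b1*b2 := by nlinarith
  have P3 : (1:ℝ) ≤ b1*b2*b3 := by nlinarith
  have P4 : (1:ℝ) ≤ b1*b2*b3*b4 := by nlinarith
  have s2 : b1 + b2 ≤ b1*b2 + 1 := by nlinarith
  have s3 : b2*b3 + b1*b3 + b1*b2 ≤ 2*(b1*b2*b3) + 1 := by
    nlinarith [mul_le_mul_of_nonneg_left s2 c3, mul_nonneg (sub_nonneg.2 d3) (sub_nonneg.2 P2)]
  have s4 : b2*b3*b4 + b1*b3*b4 + b1*b2*b4 + b1*b2*b3 ≤ 3*(b1*b2*b3*b4) + 1 := by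
    nlinarith [mul_le_mul_of_nonneg_left s3 c4, mul_nonneg (sub_nonneg.2 d4) (sub_nonneg.2 P3)]
  nlinarith [mul_le_mul_of_nonneg_left s4 c5, mul_nonneg (sub_nonneg.2 d5) (sub_nonneg.2 P4)]

lemma key (a1 a2 a3 a4 a5 b1 b2 b3 b4 b5 p1 p2 p3 p4 p5 : ℝ)
    (ha1 : a1 ≤ p1) (ha2 : a2 ≤ p2) (ha3 : a3 ≤ p3) (ha4 : a4 ≤ p4) (ha5 : a5 ≤ p5)
    (hb1 : p1 ≤ b1) (hb2 : p2 ≤ b2) (hb3 : p3 ≤ b3) (hb4 : p4 ≤ b4) (hb5 : p5 ≤ b5)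
    (hp1 : p1 = 0 ∨ p1 = 1) (hp2 : p2 = 0 ∨ p2 = 1) (hp3 : p3 = 0 ∨ p3 = 1)
    (hp4 : p4 = 0 ∨ p4 = 1) (hp5 : p5 = 0 ∨ p5 = 1) :
    p1*p2*p3*p4*p5 ≥
      (a1*(b2*b3*b4*b5) + a2*(b1*b3*b4*b5) + a3*(b1*b2*b4*b5)
        + a4*(b1*b2*b3*b5) + a5*(b1*b2*b3*b4)) - 4*(b1*b2*b3*b4*b5) := by
  have q1 : (0:ℝ) ≤ p1 := by rcases hp1 with h|h <;> simp [h]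
  have q2 : (0:ℝ) ≤ p2 := by rcases hp2 with h|h <;> simp [h]
  have q3 : (0:ℝ) ≤ p3 := by rcases hp3 with h|h <;> simp [h]
  have q4 : (0:ℝ) ≤ p4 := by rcases hp4 with h|h <;> simp [h]
  have q5 : (0:ℝ) ≤ p5 := by rcases hp5 with h|h <;> simp [h]
  have c1 : (0:ℝ) ≤ b1 := q1.trans hb1
  have c2 : (0:ℝ) ≤ b2 := q2.trans hb2
  have c3 : (0:ℝ) ≤ b3 := q3.trans hb3
  have c4 : (0:ℝ) ≤ b4 := q4.trans hb4
  have c5 : (0:ℝ) ≤ b5 := q5.trans hb5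
  have B1 : (0:ℝ) ≤ b2*b3*b4*b5 := by positivity
  have B2 : (0:ℝ) ≤ b1*b3*b4*b5 := by positivity
  have B3 : (0:ℝ) ≤ b1*b2*b4*b5 := by positivity
  have B4 : (0:ℝ) ≤ b1*b2*b3*b5 := by positivity
  have B5 : (0:ℝ) ≤ b1*b2*b3*b4 := by positivity
  have P0 : (0:ℝ) ≤ b1*b2*b3*b4*b5 := by positivity
  have F1 : a1*(b2*b3*b4*b5) ≤ b1*b2*b3*b4*b5 := by
    have h := mul_le_mul_of_nonneg_right (ha1.trans hb1) B1
    have e : b1*(b2*b3*b4*b5) = b1*b2*b3*b4*b5 := by ring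
    linarith
  have F2 : a2*(b1*b3*b4*b5) ≤ b1*b2*b3*b4*b5 := by
    have h := mul_le_mul_of_nonneg_right (ha2.trans hb2) B2
    have e : b2*(b1*b3*b4*b5) = b1*b2*b3*b4*b5 := by ring
    linarith
  have F3 : a3*(b1*b2*b4*b5) ≤ b1*b2*b3*b4*b5 := by
    have h := mul_le_mul_of_nonneg_right (ha3.trans hb3) B3
    have e : b3*(b1*b2*b4*b5) = b1*b2*b3*b4*b5 := by ring
    linarith
  have F4 : a4*(b1*b2*b3*b5) ≤ b1*b2*b3*b4*b5 := by
    have h := mul_le_mul_of_nonneg_right (ha4.trans hb4) B4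
    have e : b4*(b1*b2*b3*b5) = b1*b2*b3*b4*b5 := by ring
    linarith
  have F5 : a5*(b1*b2*b3*b4) ≤ b1*b2*b3*b4*b5 := by
    have h := mul_le_mul_of_nonneg_right (ha5.trans hb5) B5
    have e : b5*(b1*b2*b3*b4) = b1*b2*b3*b4*b5 := by ring
    linarith
  rcases hp1 with h1|h1
  · have G1 : a1*(b2*b3*b4*b5) ≤ 0 := mul_nonpos_of_nonpos_of_nonneg (by linarith) B1
    rw [h1]; simp only [zero_mul, mul_zero]; linarith
  rcases hp2 with h2|h2
  · have G2 : a2*(b1*b3*b4*b5) ≤ 0 := mul_nonpos_of_nonpos_of_nonneg (by linarith) B2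
    rw [h2]; simp only [zero_mul, mul_zero]; linarith
  rcases hp3 with h3|h3
  · have G3 : a3*(b1*b2*b4*b5) ≤ 0 := mul_nonpos_of_nonpos_of_nonneg (by linarith) B3
    rw [h3]; simp only [zero_mul, mul_zero]; linarith
  rcases hp4 with h4|h4
  · have G4 : a4*(b1*b2*b3*b5) ≤ 0 := mul_nonpos_of_nonpos_of_nonneg (by linarith) B4
    rw [h4]; simp only [zero_mul, mul_zero]; linarith
  rcases hp5 with h5|h5
  · have G5 : a5*(b1*b2*b3*b4) ≤ 0 := mul_nonpos_of_nonpos_of_nonneg (by linarith) B5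
    rw [h5]; simp only [zero_mul, mul_zero]; linarith
  subst h1 h2 h3 h4 h5
  have s5 := chain5 b1 b2 b3 b4 b5 hb1 hb2 hb3 hb4 hb5
  have E1 : a1*(b2*b3*b4*b5) ≤ b2*b3*b4*b5 := by
    have := mul_le_mul_of_nonneg_right ha1 B1; linarith
  have E2 : a2*(b1*b3*b4*b5) ≤ b1*b3*b4*b5 := by
    have := mul_le_mul_of_nonneg_right ha2 B2; linarith
  have E3 : a3*(b1*b2*b4*b5) ≤ b1*b2*b4*b5 := by
    have := mul_le_mul_of_nonneg_right ha3 B3; linarith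
  have E4 : a4*(b1*b2*b3*b5) ≤ b1*b2*b3*b5 := by
    have := mul_le_mul_of_nonneg_right ha4 B4; linarith
  have E5 : a5*(b1*b2*b3*b4) ≤ b1*b2*b3*b4 := by
    have := mul_le_mul_of_nonneg_right ha5 B5; linarith
  norm_num
  linarith

lemma erase_prod (f : Fin 5 → ℝ) :
    (∏ j ∈ univ.erase (0:Fin 5), f j, ∏ j ∈ univ.erase (1:Fin 5), f j,
     ∏ j ∈ univ.erase (2:Fin 5), f j, ∏ j ∈ univ.erase (3:Fin 5), f j,
     ∏ j ∈ univ.erase (4:Fin 5), f j) =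
    (f 1 * f 2 * f 3 * f 4, f 0 * f 2 * f 3 * f 4, f 0 * f 1 * f 3 * f 4,
     f 0 * f 1 * f 2 * f 4, f 0 * f 1 * f 2 * f 3) := by
  rw [show (univ.erase (0:Fin 5)) = {1,2,3,4} from by decide,
      show (univ.erase (1:Fin 5)) = {0,2,3,4} from by decide,
      show (univ.erase (2:Fin 5)) = {0,1,3,4} from by decide,
      show (univ.erase (3:Fin 5)) = {0,1,2,4} from by decide,
      show (univ.erase (4:Fin 5)) = {0,1,2,3} from by decide]
  simp [Finset.prod_insert, Finset.mem_insert]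
  exact ⟨by ring, by ring, by ring, by ring, by ring⟩

theorem stmt_0 (I : Set ℕ) (lamm lamp : ℕ → ℝ)
    (hsand : ∀ m ∈ I, lamm m ≤ (if Nat.Prime m then (1:ℝ) else 0) ∧
      (if Nat.Prime m then (1:ℝ) else 0) ≤ lamp m)
    (m : Fin 5 → ℕ) (hm : ∀ i, m i ∈ I) :
    ∏ i, (if Nat.Prime (m i) then (1:ℝ) else 0) ≥
      (∑ i, lamm (m i) * ∏ j ∈ univ.erase i, lamp (m j)) -
        4 * ∏ i, lamp (m i) := by
  have h := erase_prod (fun j => lamp (m j))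
  simp only [Prod.mk.injEq] at h
  obtain ⟨e0, e1, e2, e3, e4⟩ := h
  rw [Fin.prod_univ_five, Fin.sum_univ_five, Fin.prod_univ_five, e0, e1, e2, e3, e4]
  have hp : ∀ i : Fin 5, (if Nat.Prime (m i) then (1:ℝ) else 0) = 0 ∨
      (if Nat.Prime (m i) then (1:ℝ) else 0) = 1 := by
    intro i; split <;> simp
  have key' := key (lamm (m 0)) (lamm (m 1)) (lamm (m 2)) (lamm (m 3)) (lamm (m 4))
    (lamp (m 0)) (lamp (m 1)) (lamp (m 2)) (lamp (m 3)) (lamp (m 4))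
    (if Nat.Prime (m 0) then (1:ℝ) else 0) (if Nat.Prime (m 1) then (1:ℝ) else 0)
    (if Nat.Prime (m 2) then (1:ℝ) else 0) (if Nat.Prime (m 3) then (1:ℝ) else 0)
    (if Nat.Prime (m 4) then (1:ℝ) else 0)
    (hsand _ (hm 0)).1 (hsand _ (hm 1)).1 (hsand _ (hm 2)).1 (hsand _ (hm 3)).1
    (hsand _ (hm 4)).1
    (hsand _ (hm 0)).2 (hsand _ (hm 1)).2 (hsand _ (hm 2)).2 (hsand _ (hm 3)).2
    (hsand _ (hm 4)).2
    (hp 0) (hp 1) (hp 2) (hp 3) (hp 4)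
  linarith [key']
end

section
/- More generally, if real numbers $a_i, b_i, c_i$ for $1 \le i \le 5$ satisfy $a_i \le b_i \le c_i$, $b_i \in \{0,1\}$, and $c_i \ge 0$ for each $i$, then $b_1 b_2 b_3 b_4 b_5 \ge \sum_{i=1}^{5} a_i \prod_{j \ne i} c_j - 4\, c_1 c_2 c_3 c_4 c_5$. -/
open Finset

theorem stmt_1 (a b c : Fin 5 → ℝ)
    (hab : ∀ i, a i ≤ b i) (hbc : ∀ i, b i ≤ c i)
    (hb01 : ∀ i, b i = 0 ∨ b i = 1) (hc : ∀ i, 0 ≤ c i) :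
    ∏ i, b i ≥ (∑ i, a i * ∏ j ∈ univ.erase i, c j) - 4 * ∏ i, c i := by
  have hPnn : ∀ i : Fin 5, 0 ≤ ∏ j ∈ univ.erase i, c j := fun i =>
    Finset.prod_nonneg fun j _ => hc j
  have hPc : ∀ i : Fin 5, c i * ∏ j ∈ univ.erase i, c j = ∏ j, c j := fun i =>
    Finset.mul_prod_erase univ c (mem_univ i)
  by_cases hall : ∀ i, b i = 1
  · -- all b = 1
    have hb1 : ∏ i, b i = 1 := by
      rw [Finset.prod_eq_one fun i _ => hall i]
    rw [hb1]
    have hc1 : ∀ i, (1:ℝ) ≤ c i := fun i => (hall i) ▸ hbc i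
    have ha1 : ∀ i, a i ≤ 1 := fun i => (hall i) ▸ hab i
    have hsum : ∀ i : Fin 5, a i * ∏ j ∈ univ.erase i, c j ≤ ∏ j ∈ univ.erase i, c j :=
      fun i => by nlinarith [hPnn i, ha1 i]
    have key : (∑ i : Fin 5, ∏ j ∈ univ.erase i, c j) ≤ 1 + 4 * ∏ i, c i := by
      have e0 : (univ : Finset (Fin 5)).erase 0 = {1,2,3,4} := by decide
      have e1 : (univ : Finset (Fin 5)).erase 1 = {0,2,3,4} := by decide
      have e2 : (univ : Finset (Fin 5)).erase 2 = {0,1,3,4} := by decide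
      have e3 : (univ : Finset (Fin 5)).erase 3 = {0,1,2,4} := by decide
      have e4 : (univ : Finset (Fin 5)).erase 4 = {0,1,2,3} := by decide
      rw [Fin.sum_univ_five, Fin.prod_univ_five, e0, e1, e2, e3, e4]
      repeat rw [Finset.prod_insert (by decide)]
      repeat rw [Finset.prod_singleton]
      have h0 := hc1 0; have h1 := hc1 1; have h2 := hc1 2
      have h3 := hc1 3; have h4 := hc1 4
      have s2 : c 0 + c 1 ≤ 1 + c 0 * c 1 := by nlinarith
      have s3 : c 1 * c 2 + c 0 * c 2 + c 0 * c 1 ≤ 1 + 2 * (c 0 * c 1 * c 2) := by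
        nlinarith [mul_le_mul_of_nonneg_left s2 (hc 2),
          mul_nonneg (sub_nonneg.2 h2) (sub_nonneg.2 (one_le_mul_of_one_le_of_one_le h0 h1))]
      have s4 : c 1 * c 2 * c 3 + c 0 * c 2 * c 3 + c 0 * c 1 * c 3 + c 0 * c 1 * c 2
          ≤ 1 + 3 * (c 0 * c 1 * c 2 * c 3) := by
        nlinarith [mul_le_mul_of_nonneg_left s3 (hc 3),
          mul_nonneg (sub_nonneg.2 h3) (sub_nonneg.2 (one_le_mul_of_one_le_of_one_le
            (one_le_mul_of_one_le_of_one_le h0 h1) h2))]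
      nlinarith [mul_le_mul_of_nonneg_left s4 (hc 4),
        mul_nonneg (sub_nonneg.2 h4) (sub_nonneg.2 (one_le_mul_of_one_le_of_one_le
          (one_le_mul_of_one_le_of_one_le (one_le_mul_of_one_le_of_one_le h0 h1) h2) h3))]
    calc (∑ i, a i * ∏ j ∈ univ.erase i, c j) - 4 * ∏ i, c i
        ≤ (∑ i : Fin 5, ∏ j ∈ univ.erase i, c j) - 4 * ∏ i, c i := by
          gcongr with i; exact hsum i
      _ ≤ 1 := by linarith
  · push_neg at hall
    obtain ⟨k, hk⟩ := hall
    have hbk : b k = 0 := (hb01 k).resolve_right hk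
    have hb0 : ∏ i, b i = 0 := Finset.prod_eq_zero (mem_univ k) hbk
    rw [hb0]
    have hak : a k * ∏ j ∈ univ.erase k, c j ≤ 0 :=
      mul_nonpos_of_nonpos_of_nonneg (by linarith [hab k, hbk ▸ hab k]) (hPnn k)
    have hterm : ∀ i : Fin 5, a i * ∏ j ∈ univ.erase i, c j ≤ ∏ j, c j := by
      intro i
      have : a i * ∏ j ∈ univ.erase i, c j ≤ c i * ∏ j ∈ univ.erase i, c j := by
        have := hPnn i
        nlinarith [(hab i).trans (hbc i)]
      rw [hPc i] at this; exact this
    have hsum : (∑ i, a i * ∏ j ∈ univ.erase i, c j) ≤ 4 * ∏ j, c j := by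
      have := Finset.sum_erase_add univ (fun i => a i * ∏ j ∈ univ.erase i, c j) (mem_univ k)
      have hrest : (∑ i ∈ univ.erase k, a i * ∏ j ∈ univ.erase i, c j)
          ≤ ∑ i ∈ univ.erase k, ∏ j, c j :=
        Finset.sum_le_sum fun i _ => hterm i
      have hcard : (univ.erase k).card = 4 := by
        rw [Finset.card_erase_of_mem (mem_univ k)]; simp
      rw [Finset.sum_const, hcard, nsmul_eq_mul] at hrest
      norm_num at hrest
      have : (∑ i, a i * ∏ j ∈ univ.erase i, c j)
          = (∑ i ∈ univ.erase k, a i * ∏ j ∈ univ.erase i, c j)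
            + a k * ∏ j ∈ univ.erase k, c j := by rw [this]
      rw [this]
      linarith
    linarith
end

section
/- Let $k \ge 2$, let $x, y > 0$ with $y \le x/2$, let $\mathcal{I} = (x - y, x + y]$, and let $Q \ge 1$. Define $v(\beta) = \int_{\mathcal{I}} e(u^k \beta)\, du$ with $e(z) = \exp(2\pi i z)$. Then $\int_{-1/Q}^{1/Q} |v(\beta)|^2 \, d\beta \ll y x^{1-k} + y Q^{-1} \log(2 + x^k/Q)$, where the implied constant depends only on $k$. -/
open MeasureTheory

/-- `eC r = exp(2πir)`. -/
noncomputable def eC (r : ℝ) : ℂ := Complex.exp (2 * Real.pi * Complex.I * r)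

section helpers
open Real Complex intervalIntegral

lemma derivF (m : ℕ) (c : ℂ) (hc : c ≠ 0) (z : ℂ) (hz : z ≠ 0) :
    HasDerivAt (fun z : ℂ => Complex.exp (c * z^(m+2)) * ((c*(m+2))⁻¹ * (z^(m+1))⁻¹))
      (Complex.exp (c * z^(m+2)) - Complex.exp (c * z^(m+2)) * (((m:ℂ)+1) * (c*(m+2))⁻¹ * (z^(m+2))⁻¹)) z := by
  have hn1 : ((m:ℂ)+2) ≠ 0 := by
    have : ((m+2:ℕ):ℂ) ≠ 0 := Nat.cast_ne_zero.2 (by omega)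
    push_cast at this; exact this
  have h1 : HasDerivAt (fun z : ℂ => c * z^(m+2)) (c * ((m+2) * z^(m+1))) z := by
    simpa using (hasDerivAt_pow (m+2) z).const_mul c
  have h2 := h1.cexp
  have h3 : HasDerivAt (fun z : ℂ => (z^(m+1))⁻¹) (-(((m:ℂ)+1) * z^m) / (z^(m+1))^2) z := by
    have := (hasDerivAt_pow (m+1) z).inv (pow_ne_zero _ hz)
    simp at this
    exact this
  have h4 := h2.mul (h3.const_mul ((c*((m:ℂ)+2))⁻¹))
  refine h4.congr_deriv ?_
  field_simp
  ring

lemma key2 (m : ℕ) {a b β : ℝ} (ha : 0 < a) (hab : a ≤ b) (hβ : 0 < β) :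
    ‖∫ u in a..b, eC (u ^ (m+2) * β)‖ ≤ 1 / (β * a ^ (m+1)) := by
  have hπ : (0:ℝ) < Real.pi := Real.pi_pos
  set c : ℂ := 2 * Real.pi * Complex.I * β with hc_def
  have hc : c ≠ 0 := by
    simp only [hc_def]
    simp [Complex.ext_iff, Complex.I_ne_zero, hπ.ne', hβ.ne', Real.pi_ne_zero]
  have hpos : ∀ u ∈ Set.uIcc a b, 0 < u := by
    intro u hu
    rw [Set.uIcc_of_le hab] at hu
    exact lt_of_lt_of_le ha hu.1
  have h0 : (0:ℝ) ∉ Set.uIcc a b := fun h => (hpos 0 h).false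
  have hfun : ∀ u : ℝ, eC (u ^ (m+2) * β) = Complex.exp (c * (u:ℂ)^(m+2)) := by
    intro u; unfold eC; congr 1; push_cast; ring
  have hnexp : ∀ u : ℝ, ‖Complex.exp (c * (u:ℂ)^(m+2))‖ = 1 := by
    intro u
    have : c * (u:ℂ)^(m+2) = ((2*Real.pi*β*u^(m+2) : ℝ) : ℂ) * Complex.I := by
      simp only [hc_def]; push_cast; ring
    rw [this, Complex.norm_exp_ofReal_mul_I]
  have hnormc2 : ‖c * ((m:ℂ)+2)‖ = 2 * Real.pi * β * ((m:ℝ)+2) := by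
    rw [norm_mul]
    have h1 : ‖c‖ = 2 * Real.pi * β := by
      simp only [hc_def]
      rw [norm_mul, norm_mul, norm_mul]
      simp [Complex.norm_real, Real.norm_eq_abs, abs_of_pos hπ, abs_of_pos hβ]
    have h2 : ‖((m:ℂ)+2)‖ = (m:ℝ)+2 := by
      have : ((m:ℂ)+2) = (((m:ℝ)+2 : ℝ) : ℂ) := by push_cast; ring
      rw [this, Complex.norm_real, Real.norm_eq_abs, abs_of_pos (by positivity)]
    rw [h1, h2]
  set g : ℝ → ℂ := fun u => Complex.exp (c * (u:ℂ)^(m+2)) * ((c*(m+2))⁻¹ * ((u:ℂ)^(m+1))⁻¹) with hg_def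
  set E : ℝ → ℂ := fun u => Complex.exp (c * (u:ℂ)^(m+2)) -
      Complex.exp (c * (u:ℂ)^(m+2)) * (((m:ℂ)+1) * (c*(m+2))⁻¹ * ((u:ℂ)^(m+2))⁻¹) with hE_def
  set corr : ℝ → ℂ := fun u => Complex.exp (c * (u:ℂ)^(m+2)) *
      (((m:ℂ)+1) * (c*(m+2))⁻¹ * ((u:ℂ)^(m+2))⁻¹) with hcorr_def
  have hgderiv : ∀ u ∈ Set.uIcc a b, HasDerivAt g (E u) u := fun u hu =>
    (derivF m c hc u (by exact_mod_cast (hpos u hu).ne')).comp_ofReal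
  have hcont1 : Continuous fun u : ℝ => Complex.exp (c * (u:ℂ)^(m+2)) := by fun_prop
  have hcontinv : ContinuousOn (fun u : ℝ => ((u:ℂ)^(m+2))⁻¹) (Set.uIcc a b) := by
    apply ContinuousOn.inv₀
    · fun_prop
    · intro u hu
      exact pow_ne_zero _ (by exact_mod_cast (hpos u hu).ne')
  have hcorr_cont : ContinuousOn corr (Set.uIcc a b) := by
    exact hcont1.continuousOn.mul (continuousOn_const.mul hcontinv)
  have hcorr_int : IntervalIntegrable corr volume a b := hcorr_cont.intervalIntegrable
  have hE_int : IntervalIntegrable E volume a b := by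
    have : ContinuousOn E (Set.uIcc a b) := hcont1.continuousOn.sub hcorr_cont
    exact this.intervalIntegrable
  have hFTC : ∫ u in a..b, E u = g b - g a :=
    intervalIntegral.integral_eq_sub_of_hasDerivAt hgderiv hE_int
  have hid : (∫ u in a..b, eC (u^(m+2)*β)) = (g b - g a) + ∫ u in a..b, corr u := by
    rw [← hFTC, ← intervalIntegral.integral_add hE_int hcorr_int]
    apply intervalIntegral.integral_congr
    intro u _
    simp only [hE_def, hcorr_def, hfun u]
    ring
  -- norm of g
  have hg_norm : ∀ u : ℝ, 0 < u → ‖g u‖ = (2*Real.pi*β*((m:ℝ)+2))⁻¹ * (u^(m+1))⁻¹ := by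
    intro u hu
    simp only [hg_def]
    rw [norm_mul, hnexp, one_mul, norm_mul, norm_inv, norm_inv, hnormc2]
    congr 1
    rw [norm_pow, Complex.norm_real, Real.norm_eq_abs, abs_of_pos hu]
  -- norm of corr
  have hcorr_norm : ∀ u : ℝ, 0 < u →
      ‖corr u‖ = ((m:ℝ)+1) * (2*Real.pi*β*((m:ℝ)+2))⁻¹ * (u^(m+2))⁻¹ := by
    intro u hu
    simp only [hcorr_def]
    rw [norm_mul, hnexp, one_mul, norm_mul, norm_mul, norm_inv, norm_inv, hnormc2]
    have h2 : ‖((m:ℂ)+1)‖ = (m:ℝ)+1 := by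
      have : ((m:ℂ)+1) = (((m:ℝ)+1 : ℝ) : ℂ) := by push_cast; ring
      rw [this, Complex.norm_real, Real.norm_eq_abs, abs_of_pos (by positivity)]
    rw [h2, norm_pow, Complex.norm_real, Real.norm_eq_abs, abs_of_pos hu]
  have hb : 0 < b := lt_of_lt_of_le ha hab
  -- integral of (u^(m+2))⁻¹ via FTC
  have hderivH : ∀ u ∈ Set.uIcc a b,
      HasDerivAt (fun u : ℝ => -(((m:ℝ)+1)⁻¹ * (u^(m+1))⁻¹)) ((u^(m+2))⁻¹) u := by
    intro u hu
    have hu0 : u ≠ 0 := (hpos u hu).ne'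
    have h3 : HasDerivAt (fun u : ℝ => (u^(m+1))⁻¹) (-(((m:ℝ)+1) * u^m) / (u^(m+1))^2) u := by
      have := (hasDerivAt_pow (m+1) u).inv (pow_ne_zero _ hu0)
      simp at this
      exact this
    have h4 := (h3.const_mul (((m:ℝ)+1)⁻¹)).neg
    refine h4.congr_deriv ?_
    have hm1 : ((m:ℝ)+1) ≠ 0 := by positivity
    field_simp
    ring
  have hinv_cont : ContinuousOn (fun u : ℝ => (u^(m+2))⁻¹) (Set.uIcc a b) :=
    ContinuousOn.inv₀ (by fun_prop) (fun u hu => pow_ne_zero _ (hpos u hu).ne')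
  have hJval : (∫ u in a..b, (u^(m+2))⁻¹) =
      (((m:ℝ)+1)⁻¹ * (a^(m+1))⁻¹) - (((m:ℝ)+1)⁻¹ * (b^(m+1))⁻¹) := by
    rw [intervalIntegral.integral_eq_sub_of_hasDerivAt hderivH hinv_cont.intervalIntegrable]
    ring
  have hcorr_eq : (∫ u in a..b, ‖corr u‖) =
      ((m:ℝ)+1) * (2*Real.pi*β*((m:ℝ)+2))⁻¹ * ∫ u in a..b, (u^(m+2))⁻¹ := by
    rw [← intervalIntegral.integral_const_mul]
    apply intervalIntegral.integral_congr
    intro u hu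
    exact hcorr_norm u (hpos u hu)
  have hAa : (0:ℝ) < a^(m+1) := by positivity
  have hAb : (0:ℝ) < b^(m+1) := by positivity
  have hP : (0:ℝ) < (2*Real.pi*β*((m:ℝ)+2))⁻¹ := by positivity
  set P : ℝ := (2*Real.pi*β*((m:ℝ)+2))⁻¹ with hP_def
  have hcorr_le : (∫ u in a..b, ‖corr u‖) ≤ P * (a^(m+1))⁻¹ := by
    rw [hcorr_eq, hJval]
    have hm1 : ((m:ℝ)+1) ≠ 0 := by positivity
    have heq : ((m:ℝ)+1) * P * ((((m:ℝ)+1)⁻¹ * (a^(m+1))⁻¹) - (((m:ℝ)+1)⁻¹ * (b^(m+1))⁻¹))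
        = P * (a^(m+1))⁻¹ - P * (b^(m+1))⁻¹ := by
      field_simp
    rw [heq]
    have : 0 ≤ P * (b^(m+1))⁻¹ := by positivity
    linarith
  have hgb : ‖g b‖ ≤ P * (a^(m+1))⁻¹ := by
    rw [hg_norm b hb]
    apply mul_le_mul_of_nonneg_left _ hP.le
    apply inv_anti₀ hAa
    exact pow_le_pow_left₀ ha.le hab _
  have hga : ‖g a‖ ≤ P * (a^(m+1))⁻¹ := le_of_eq (hg_norm a ha)
  have htotal : ‖∫ u in a..b, eC (u^(m+2)*β)‖ ≤ 3 * (P * (a^(m+1))⁻¹) := by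
    rw [hid]
    calc ‖(g b - g a) + ∫ u in a..b, corr u‖
        ≤ ‖g b - g a‖ + ‖∫ u in a..b, corr u‖ := norm_add_le _ _
      _ ≤ (‖g b‖ + ‖g a‖) + ∫ u in a..b, ‖corr u‖ :=
          add_le_add (norm_sub_le _ _) (intervalIntegral.norm_integral_le_integral_norm hab)
      _ ≤ (P * (a^(m+1))⁻¹ + P * (a^(m+1))⁻¹) + P * (a^(m+1))⁻¹ :=
          add_le_add (add_le_add hgb hga) hcorr_le
      _ = 3 * (P * (a^(m+1))⁻¹) := by ring
  refine htotal.trans ?_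
  have hπ3 : (3:ℝ) < Real.pi := Real.pi_gt_three
  have hm0 : (0:ℝ) ≤ (m:ℝ) := Nat.cast_nonneg m
  have hkey : 3 * (2*Real.pi*β*((m:ℝ)+2))⁻¹ ≤ β⁻¹ := by
    rw [mul_inv_le_iff₀ (by positivity)]
    have heq2 : β⁻¹ * (2*Real.pi*β*((m:ℝ)+2)) = 2*Real.pi*((m:ℝ)+2) := by
      field_simp
    rw [heq2]
    nlinarith
  have hrhs : 1/(β * a^(m+1)) = β⁻¹ * (a^(m+1))⁻¹ := by
    rw [one_div, mul_inv]
  rw [hrhs, hP_def]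
  calc 3 * ((2*Real.pi*β*((m:ℝ)+2))⁻¹ * (a^(m+1))⁻¹)
      = (3 * (2*Real.pi*β*((m:ℝ)+2))⁻¹) * (a^(m+1))⁻¹ := by ring
    _ ≤ β⁻¹ * (a^(m+1))⁻¹ := mul_le_mul_of_nonneg_right hkey (by positivity)


lemma continuous_eC : Continuous eC := by
  unfold eC; fun_prop

lemma eC_neg (r : ℝ) : eC (-r) = (starRingEnd ℂ) (eC r) := by
  unfold eC
  rw [← Complex.exp_conj]
  congr 1
  simp only [map_mul, Complex.conj_I, Complex.conj_ofReal, map_ofNat]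
  push_cast
  ring

lemma norm_eC (r : ℝ) : ‖eC r‖ = 1 := by
  have : eC r = Complex.exp (((2*Real.pi*r : ℝ)) * Complex.I) := by
    unfold eC; push_cast; ring_nf
  rw [this, Complex.norm_exp_ofReal_mul_I]

lemma trivialBound (k : ℕ) {a b : ℝ} (hab : a ≤ b) (β : ℝ) :
    ‖∫ u in a..b, eC (u^k*β)‖ ≤ b - a := by
  have h := intervalIntegral.norm_integral_le_of_norm_le_const
    (C := 1) (f := fun u : ℝ => eC (u^k*β)) (a := a) (b := b)
    (fun u _ => le_of_eq (norm_eC _))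
  rwa [one_mul, _root_.abs_of_nonneg (sub_nonneg.2 hab)] at h

lemma norm_int_neg (k : ℕ) (a b β : ℝ) :
    ‖∫ u in a..b, eC (u^k * (-β))‖ = ‖∫ u in a..b, eC (u^k * β)‖ := by
  have h1 : ∀ u : ℝ, eC (u^k * (-β)) = (starRingEnd ℂ) (eC (u^k*β)) := by
    intro u
    rw [show u^k * (-β) = -(u^k*β) by ring, eC_neg]
  have h2 : (∫ u in a..b, eC (u^k * (-β))) = ∫ u in a..b, (starRingEnd ℂ) (eC (u^k*β)) := by
    simp_rw [h1]
  have h3 : (∫ u in a..b, (starRingEnd ℂ) (eC (u^k*β)))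
      = (starRingEnd ℂ) (∫ u in a..b, eC (u^k*β)) := by
    simp only [intervalIntegral]
    rw [integral_conj, integral_conj, ← map_sub]
  rw [h2, h3, RCLike.norm_conj]

lemma int_inv_sq {p q : ℝ} (h : (0:ℝ) ∉ Set.uIcc p q) :
    ∫ β in p..q, (β^2)⁻¹ = p⁻¹ - q⁻¹ := by
  have hder : ∀ β ∈ Set.uIcc p q, HasDerivAt (fun t : ℝ => -t⁻¹) ((β^2)⁻¹) β := by
    intro β hβ
    have hβ0 : β ≠ 0 := fun e => h (e ▸ hβ)
    have := (hasDerivAt_inv hβ0).neg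
    simp at this
    exact this
  have hcont : ContinuousOn (fun β : ℝ => (β^2)⁻¹) (Set.uIcc p q) :=
    ContinuousOn.inv₀ (by fun_prop) (fun β hβ => pow_ne_zero _ (fun e => h (e ▸ hβ)))
  rw [intervalIntegral.integral_eq_sub_of_hasDerivAt hder hcont.intervalIntegrable]
  ring

theorem stmt_3 (k : ℕ) (hk : 2 ≤ k) :
    ∃ C > 0, ∀ x y Q : ℝ, 0 < x → 0 < y → y ≤ x / 2 → 1 ≤ Q →
      (∫ β in (-(1/Q))..(1/Q),
          ‖∫ u in (x - y)..(x + y), eC (u ^ k * β)‖ ^ 2) ≤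
        C * (y * x ^ ((1 : ℝ) - k) + y / Q * Real.log (2 + x ^ (k : ℝ) / Q)) := by
  obtain ⟨m, rfl⟩ : ∃ m, k = m + 2 := ⟨k - 2, by omega⟩
  refine ⟨2^(m+4), by positivity, ?_⟩
  intro x y Q hx hy hyx hQ
  have hQ0 : (0:ℝ) < Q := lt_of_lt_of_le one_pos hQ
  set a := x - y with ha_def
  set b := x + y with hb_def
  have ha : 0 < a := by simp only [ha_def]; linarith
  have hab : a ≤ b := by simp only [ha_def, hb_def]; linarith
  have hax : x/2 ≤ a := by simp only [ha_def]; linarith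
  set V : ℝ → ℂ := fun β => ∫ u in a..b, eC (u^(m+2)*β) with hV_def
  have hVcont : Continuous V := by
    apply intervalIntegral.continuous_parametric_intervalIntegral_of_continuous'
    exact continuous_eC.comp ((continuous_snd.pow (m+2)).mul continuous_fst)
  have hVsq : Continuous fun β => ‖V β‖^2 := (hVcont.norm).pow 2
  set A : ℝ := (a^(m+1))⁻¹ with hA_def
  have hA : 0 < A := by positivity
  set β₀ : ℝ := A / (2*y) with hβ₀_def
  have hβ₀ : 0 < β₀ := by positivity
  -- pointwise bounds
  have hsq1 : ∀ β : ℝ, ‖V β‖^2 ≤ 4*y^2 := by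
    intro β
    have h1 : ‖V β‖ ≤ 2*y := by
      have := trivialBound (m+2) hab β
      simp only [ha_def, hb_def] at this ⊢
      calc ‖V β‖ ≤ (x+y) - (x-y) := this
        _ = 2*y := by ring
    calc ‖V β‖^2 ≤ (2*y)^2 := by
          apply pow_le_pow_left₀ (norm_nonneg _) h1
      _ = 4*y^2 := by ring
  have hsq2 : ∀ β : ℝ, β ≠ 0 → ‖V β‖^2 ≤ A^2 * (β^2)⁻¹ := by
    intro β hβne
    have h1 : ‖V β‖ ≤ 1/(|β| * a^(m+1)) := by
      rcases hβne.lt_or_gt with hneg | hpos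
      · have : V β = ∫ u in a..b, eC (u^(m+2) * (-(-β))) := by simp [hV_def]
        rw [hV_def]
        calc ‖∫ u in a..b, eC (u^(m+2)*β)‖
            = ‖∫ u in a..b, eC (u^(m+2) * (-(-β)))‖ := by norm_num
          _ = ‖∫ u in a..b, eC (u^(m+2) * (-β))‖ := norm_int_neg (m+2) a b (-β)
          _ ≤ 1/((-β) * a^(m+1)) := key2 m ha hab (by linarith)
          _ = 1/(|β| * a^(m+1)) := by rw [abs_of_neg hneg]
      · calc ‖V β‖ ≤ 1/(β * a^(m+1)) := key2 m ha hab hpos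
          _ = 1/(|β| * a^(m+1)) := by rw [abs_of_pos hpos]
    have h2 : 1/(|β| * a^(m+1)) = A * |β|⁻¹ := by
      rw [hA_def, one_div, mul_inv, mul_comm]
    calc ‖V β‖^2 ≤ (A * |β|⁻¹)^2 := by
          rw [← h2]; exact pow_le_pow_left₀ (norm_nonneg _) h1 2
      _ = A^2 * (β^2)⁻¹ := by simp [mul_pow, inv_pow, _root_.sq_abs]
  -- main case split
  have hIint : ∀ p q : ℝ, IntervalIntegrable (fun β => ‖V β‖^2) volume p q :=
    fun p q => hVsq.intervalIntegrable p q
  have hgoal8 : (∫ β in (-(1/Q))..(1/Q), ‖V β‖^2) ≤ 8 * y * A := by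
    rcases le_or_gt (1/Q) β₀ with hcase | hcase
    · -- trivial bound everywhere
      have hle : -(1/Q) ≤ 1/Q := by
        have : (0:ℝ) < 1/Q := by positivity
        linarith
      calc (∫ β in (-(1/Q))..(1/Q), ‖V β‖^2)
          ≤ ∫ _β in (-(1/Q))..(1/Q), 4*y^2 :=
            intervalIntegral.integral_mono_on hle (hIint _ _)
              (intervalIntegrable_const) (fun β _ => hsq1 β)
        _ = (1/Q - -(1/Q)) * (4*y^2) := by
            rw [intervalIntegral.integral_const, smul_eq_mul]
        _ = 4*y^2 * (2*(1/Q)) := by ring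
        _ ≤ 4*y^2 * (2*β₀) := by
            apply mul_le_mul_of_nonneg_left _ (by positivity)
            linarith
        _ = 4*y*A := by
            rw [hβ₀_def]; field_simp
        _ ≤ 8*y*A := by nlinarith [mul_pos hy hA]
    · -- split into three pieces
      have h1 : IntervalIntegrable (fun β => ‖V β‖^2) volume (-(1/Q)) (-β₀) := hIint _ _
      have h2 : IntervalIntegrable (fun β => ‖V β‖^2) volume (-β₀) β₀ := hIint _ _
      have h3 : IntervalIntegrable (fun β => ‖V β‖^2) volume β₀ (1/Q) := hIint _ _
      have hsplit : (∫ β in (-(1/Q))..(1/Q), ‖V β‖^2)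
          = (∫ β in (-(1/Q))..(-β₀), ‖V β‖^2) + (∫ β in (-β₀)..β₀, ‖V β‖^2)
            + (∫ β in β₀..(1/Q), ‖V β‖^2) := by
        rw [← intervalIntegral.integral_add_adjacent_intervals (h1.trans h2) h3,
          ← intervalIntegral.integral_add_adjacent_intervals h1 h2]
      have hQβ : (0:ℝ) < 1/Q := by positivity
      -- middle piece
      have hmid : (∫ β in (-β₀)..β₀, ‖V β‖^2) ≤ 4*y*A := by
        calc (∫ β in (-β₀)..β₀, ‖V β‖^2)
            ≤ ∫ _β in (-β₀)..β₀, 4*y^2 :=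
              intervalIntegral.integral_mono_on (by linarith) (hIint _ _)
                (intervalIntegrable_const) (fun β _ => hsq1 β)
          _ = (β₀ - -β₀) * (4*y^2) := by
              rw [intervalIntegral.integral_const, smul_eq_mul]
          _ = 4*y^2 * (2*β₀) := by ring
          _ = 4*y*A := by rw [hβ₀_def]; field_simp
      -- right piece
      have hgint : ∀ p q : ℝ, (0:ℝ) ∉ Set.uIcc p q →
          IntervalIntegrable (fun β : ℝ => A^2 * (β^2)⁻¹) volume p q := by
        intro p q hpq
        apply ContinuousOn.intervalIntegrable
        apply ContinuousOn.mul continuousOn_const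
        exact ContinuousOn.inv₀ (by fun_prop)
          (fun β hβ => pow_ne_zero _ (fun e => hpq (e ▸ hβ)))
      have hnot0r : (0:ℝ) ∉ Set.uIcc β₀ (1/Q) := by
        rw [Set.uIcc_of_le hcase.le]
        intro hmem
        exact absurd hmem.1 (not_le.2 hβ₀)
      have hright : (∫ β in β₀..(1/Q), ‖V β‖^2) ≤ 2*y*A := by
        calc (∫ β in β₀..(1/Q), ‖V β‖^2)
            ≤ ∫ β in β₀..(1/Q), A^2 * (β^2)⁻¹ := by
              apply intervalIntegral.integral_mono_on hcase.le (hIint _ _) (hgint _ _ hnot0r)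
              intro β hβ
              exact hsq2 β (by have := hβ.1; intro e; rw [e] at this; linarith)
          _ = A^2 * (β₀⁻¹ - (1/Q)⁻¹) := by
              rw [intervalIntegral.integral_const_mul, int_inv_sq hnot0r]
          _ ≤ A^2 * β₀⁻¹ := by
              apply mul_le_mul_of_nonneg_left _ (by positivity)
              have : (0:ℝ) ≤ (1/Q)⁻¹ := by positivity
              linarith
          _ = 2*y*A := by
              rw [hβ₀_def]
              field_simp
      have hnot0l : (0:ℝ) ∉ Set.uIcc (-(1/Q)) (-β₀) := by
        rw [Set.uIcc_of_le (by linarith)]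
        intro hmem
        exact absurd hmem.2 (not_le.2 (by linarith))
      have hleft : (∫ β in (-(1/Q))..(-β₀), ‖V β‖^2) ≤ 2*y*A := by
        calc (∫ β in (-(1/Q))..(-β₀), ‖V β‖^2)
            ≤ ∫ β in (-(1/Q))..(-β₀), A^2 * (β^2)⁻¹ := by
              apply intervalIntegral.integral_mono_on (by linarith) (hIint _ _) (hgint _ _ hnot0l)
              intro β hβ
              exact hsq2 β (by have := hβ.2; intro e; rw [e] at this; linarith)
          _ = A^2 * ((-(1/Q))⁻¹ - (-β₀)⁻¹) := by
              rw [intervalIntegral.integral_const_mul, int_inv_sq hnot0l]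
          _ = A^2 * (β₀⁻¹ - (1/Q)⁻¹) := by
              rw [inv_neg, inv_neg]; ring
          _ ≤ A^2 * β₀⁻¹ := by
              apply mul_le_mul_of_nonneg_left _ (by positivity)
              have : (0:ℝ) ≤ (1/Q)⁻¹ := by positivity
              linarith
          _ = 2*y*A := by
              rw [hβ₀_def]
              field_simp
      rw [hsplit]
      linarith
  -- conclude
  have hxk : x^((1:ℝ) - (m+2:ℕ)) = (x^(m+1))⁻¹ := by
    have h1 : ((1:ℝ) - ((m+2:ℕ):ℝ)) = -((m+1:ℕ):ℝ) := by push_cast; ring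
    rw [h1, Real.rpow_neg hx.le, Real.rpow_natCast]
  have hAle : A ≤ 2^(m+1) * (x^(m+1))⁻¹ := by
    rw [hA_def]
    have h1 : (x/2)^(m+1) ≤ a^(m+1) := pow_le_pow_left₀ (by positivity) hax _
    have h2 : (a^(m+1))⁻¹ ≤ ((x/2)^(m+1))⁻¹ := by
      apply inv_anti₀ (by positivity) h1
    calc (a^(m+1))⁻¹ ≤ ((x/2)^(m+1))⁻¹ := h2
      _ = 2^(m+1) * (x^(m+1))⁻¹ := by
        rw [div_pow, inv_div]
        ring
  have hlog : 0 ≤ y / Q * Real.log (2 + x^((m+2:ℕ):ℝ) / Q) := by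
    apply mul_nonneg (by positivity)
    apply Real.log_nonneg
    have : (0:ℝ) ≤ x^((m+2:ℕ):ℝ) / Q := by positivity
    linarith
  calc (∫ β in (-(1/Q))..(1/Q), ‖V β‖^2) ≤ 8 * y * A := hgoal8
    _ ≤ 8 * y * (2^(m+1) * (x^(m+1))⁻¹) := by
        apply mul_le_mul_of_nonneg_left hAle (by positivity)
    _ = 2^(m+4) * (y * (x^(m+1))⁻¹) := by ring
    _ = 2^(m+4) * (y * x^((1:ℝ) - (m+2:ℕ))) := by rw [hxk]
    _ ≤ 2^(m+4) * (y * x^((1:ℝ) - (m+2:ℕ)) + y / Q * Real.log (2 + x^((m+2:ℕ):ℝ) / Q)) := by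
        apply mul_le_mul_of_nonneg_left _ (by positivity)
        linarith

end helpers
end

section
/- Let $k \ge 2$, $x, y > 0$ with $y \le x/2$, $\mathcal{I} = (x-y, x+y]$, and for a complex number $s = \sigma + it$ with $\sigma = 1/2$ define $v(\beta; s) = \int_{\mathcal{I}} u^{s-1} e(u^k \beta)\, du$. Then $\big| v(\beta; s) - x^{s-1} v(\beta; 1) \big| \ll (|s| + 1)\, y^2 x^{-3/2}$, uniformly in $\beta \in \mathbb{R}$, with an absolute implied constant. -/
open MeasureTheory

theorem stmt_5 :
    ∃ C > 0, ∀ (k : ℕ), 2 ≤ k → ∀ x y β t : ℝ, 0 < x → 0 < y → y ≤ x / 2 →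
      ‖(∫ u in (x - y)..(x + y),
            (u : ℂ) ^ ((1/2 : ℂ) + t * Complex.I - 1) * eC (u ^ k * β)) -
          (x : ℂ) ^ ((1/2 : ℂ) + t * Complex.I - 1) *
            ∫ u in (x - y)..(x + y), eC (u ^ k * β)‖ ≤
        C * (‖(1/2 : ℂ) + t * Complex.I‖ + 1) * y ^ 2 * x ^ (-(3/2) : ℝ) := by
  refine ⟨8, by norm_num, ?_⟩
  intro k hk x y β t hx hy hyx
  set s : ℂ := (1/2 : ℂ) + t * Complex.I with hs
  have hsre : s.re = 1/2 := by simp [hs]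
  have hx2 : (0:ℝ) < x/2 := by linarith
  have hab : x - y ≤ x + y := by linarith
  have hxy2 : x/2 ≤ x - y := by linarith
  -- continuity of eC composed
  have heCcont : Continuous fun u : ℝ => eC (u ^ k * β) := by
    unfold eC
    exact Complex.continuous_exp.comp (by continuity)
  have heCnorm : ∀ r : ℝ, ‖eC r‖ = 1 := by
    intro r
    unfold eC
    rw [Complex.norm_exp]
    norm_num [Complex.mul_re]
  -- continuity of cpow part
  have hcpow_cont : ContinuousOn (fun u : ℝ => (u:ℂ) ^ (s - 1)) (Set.Icc (x - y) (x + y)) := by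
    intro u hu
    have hu0 : 0 < u := lt_of_lt_of_le (by linarith) hu.1
    refine ContinuousAt.continuousWithinAt ?_
    refine (Complex.continuous_ofReal.continuousAt.cpow continuousAt_const ?_)
    exact Or.inl (by simpa using hu0)
  -- integrability
  have hint1 : IntervalIntegrable (fun u : ℝ => (u:ℂ) ^ (s - 1) * eC (u ^ k * β))
      volume (x - y) (x + y) := by
    apply ContinuousOn.intervalIntegrable
    rw [Set.uIcc_of_le hab]
    exact hcpow_cont.mul heCcont.continuousOn
  have hint2 : IntervalIntegrable (fun u : ℝ => (x:ℂ) ^ (s - 1) * eC (u ^ k * β))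
      volume (x - y) (x + y) := ((continuous_const.mul heCcont).intervalIntegrable _ _)
  -- derivative facts
  have hs2 : s - 2 ≠ -1 := by
    intro h
    have := congrArg Complex.re h
    simp [Complex.sub_re, hsre] at this
    norm_num at this
  have hs1 : s - 1 ≠ 0 := by
    intro h
    have := congrArg Complex.re h
    simp [Complex.sub_re, hsre] at this
    norm_num at this
  have hderiv : ∀ u ∈ Set.Icc (x/2) (x + y),
      HasDerivWithinAt (fun u : ℝ => (u:ℂ) ^ (s - 1)) ((s - 1) * (u:ℂ) ^ (s - 2))
        (Set.Icc (x/2) (x + y)) u := by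
    intro u hu
    have hu0 : u ≠ 0 := ne_of_gt (lt_of_lt_of_le hx2 hu.1)
    have h := (hasDerivAt_ofReal_cpow_const' hu0 hs2).const_mul (s - 1)
    have he : s - 2 + 1 = s - 1 := by ring
    rw [he] at h
    have heq : (fun y : ℝ => (s - 1) * ((y:ℂ) ^ (s - 1) / (s - 1)))
        = fun y : ℝ => (y:ℂ) ^ (s - 1) := by
      funext v; field_simp
    rw [heq] at h
    exact h.hasDerivWithinAt
  -- bound on derivative
  set M : ℝ := (‖s‖ + 1) * (2 ^ ((3:ℝ)/2) * x ^ (-(3/2) : ℝ)) with hM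
  have hbound : ∀ u ∈ Set.Icc (x/2) (x + y), ‖(s - 1) * (u:ℂ) ^ (s - 2)‖ ≤ M := by
    intro u hu
    have hu0 : 0 < u := lt_of_lt_of_le hx2 hu.1
    rw [norm_mul]
    have h1 : ‖(u:ℂ) ^ (s - 2)‖ = u ^ ((s - 2).re) := by
      rw [Complex.norm_cpow_eq_rpow_re_of_pos hu0]
    have hre : (s - 2).re = -(3/2 : ℝ) := by
      simp [Complex.sub_re, hsre]; norm_num
    rw [h1, hre]
    have h2 : u ^ (-(3/2) : ℝ) ≤ (x/2) ^ (-(3/2) : ℝ) :=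
      Real.rpow_le_rpow_of_nonpos hx2 hu.1 (by norm_num)
    have h3 : (x/2 : ℝ) ^ (-(3/2) : ℝ) = 2 ^ ((3:ℝ)/2) * x ^ (-(3/2) : ℝ) := by
      rw [div_eq_mul_inv, Real.mul_rpow hx.le (by norm_num),
        Real.inv_rpow (by norm_num), ← Real.rpow_neg (by norm_num)]
      ring
    have h4 : ‖s - 1‖ ≤ ‖s‖ + 1 := by
      simpa using norm_sub_le s 1
    calc ‖s - 1‖ * u ^ (-(3/2) : ℝ) ≤ (‖s‖ + 1) * ((x/2) ^ (-(3/2) : ℝ)) := by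
          apply mul_le_mul h4 h2 (Real.rpow_nonneg hu0.le _) (by positivity)
      _ = M := by rw [h3, hM]
  -- pointwise bound on difference
  have hxmem : x ∈ Set.Icc (x/2) (x + y) := ⟨by linarith, by linarith⟩
  have hdiff : ∀ u ∈ Set.uIoc (x - y) (x + y),
      ‖((u:ℂ) ^ (s - 1) - (x:ℂ) ^ (s - 1)) * eC (u ^ k * β)‖ ≤ M * y := by
    intro u hu
    rw [Set.uIoc_of_le hab] at hu
    have humem : u ∈ Set.Icc (x/2) (x + y) := ⟨le_trans hxy2 hu.1.le, hu.2⟩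
    have := (convex_Icc (x/2) (x + y)).norm_image_sub_le_of_norm_hasDerivWithin_le
      hderiv hbound hxmem humem
    rw [norm_mul, heCnorm, mul_one]
    refine le_trans this ?_
    have hM0 : 0 ≤ M := le_trans (norm_nonneg _) (hbound x hxmem)
    have : ‖u - x‖ ≤ y := by
      rw [Real.norm_eq_abs, abs_le]
      constructor <;> [linarith [hu.1]; linarith [hu.2]]
    exact mul_le_mul_of_nonneg_left this hM0
  -- rewrite difference as single integral
  have hrw : (∫ u in (x - y)..(x + y), (u:ℂ) ^ (s - 1) * eC (u ^ k * β)) -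
      (x:ℂ) ^ (s - 1) * ∫ u in (x - y)..(x + y), eC (u ^ k * β)
      = ∫ u in (x - y)..(x + y), ((u:ℂ) ^ (s - 1) - (x:ℂ) ^ (s - 1)) * eC (u ^ k * β) := by
    rw [← intervalIntegral.integral_const_mul, ← intervalIntegral.integral_sub hint1 hint2]
    congr 1
    funext u
    ring
  rw [hrw]
  have hfinal := intervalIntegral.norm_integral_le_of_norm_le_const hdiff
  have habs : |(x + y) - (x - y)| = 2 * y := by
    rw [abs_of_nonneg (by linarith)]; ring
  rw [habs] at hfinal
  refine le_trans hfinal ?_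
  have h2pow : (2:ℝ) ^ ((3:ℝ)/2) ≤ 4 := by
    have := Real.rpow_le_rpow_of_exponent_le (x := 2) (by norm_num)
      (show (3:ℝ)/2 ≤ 2 by norm_num)
    calc (2:ℝ) ^ ((3:ℝ)/2) ≤ 2 ^ (2:ℝ) := this
      _ = 4 := by
        rw [show (2:ℝ) = ((2:ℕ):ℝ) by norm_num, Real.rpow_natCast]; norm_num
  have hxp : (0:ℝ) ≤ x ^ (-(3/2) : ℝ) := Real.rpow_nonneg hx.le _
  have hs0 : (0:ℝ) ≤ ‖s‖ + 1 := by positivity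
  calc M * y * (2 * y) = (2 ^ ((3:ℝ)/2) * 2) * (‖s‖ + 1) * y ^ 2 * x ^ (-(3/2) : ℝ) := by
        rw [hM]; ring
    _ ≤ 8 * (‖s‖ + 1) * y ^ 2 * x ^ (-(3/2) : ℝ) := by
        have : (2:ℝ) ^ ((3:ℝ)/2) * 2 ≤ 8 := by nlinarith
        have hy2 : (0:ℝ) ≤ y ^ 2 := sq_nonneg y
        apply mul_le_mul_of_nonneg_right _ hxp
        apply mul_le_mul_of_nonneg_right _ hy2
        exact mul_le_mul_of_nonneg_right this hs0
end
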